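/- Folding kills bad Fourier coefficients: let q_1,…,q_k ∈ P^n_{3(p-1)} and J := {Σ_i r_i q_i : r_i ∈ P^n_{(p-1)(d-3)}} ⊆ P^n_{(p-1)d}. Suppose β : F_p^n → F_p has |supp(β)| < p^{d-3} and there exists x ∈ supp(β) with q_i(x) ≠ 0 for some i. If A : P^n_{(p-1)d} → ℂ is constant on cosets of J, then the Fourier coefficient Â(β) = E_{h ∈ P^n_{(p-1)d}}[A(h)·conj(χ_β(h))] equals 0. -/

import Mathlib

open scoped BigOperators

noncomputable section

/-- The set of functions `F_p^n → F_p` computed by polynomials of total degree at most `d`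
with individual degrees at most `p - 1`. -/
def PolyFns (p n d : ℕ) : Set ((Fin n → ZMod p) → ZMod p) :=
  {f | ∃ P : MvPolynomial (Fin n) (ZMod p),
    P.totalDegree ≤ d ∧ (∀ i, P.degreeOf i ≤ p - 1) ∧ ∀ x, MvPolynomial.eval x P = f x}

/-- Inner product `⟨f,g⟩ = Σ_x f(x)·g(x)` on functions `F_p^n → F_p`. -/
def dotF {p n : ℕ} [NeZero p] (f g : (Fin n → ZMod p) → ZMod p) : ZMod p :=
  ∑ x : Fin n → ZMod p, f x * g x

/-- The dual of a set of functions under the inner product `dotF`. -/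
def dualSet {p n : ℕ} [NeZero p] (S : Set ((Fin n → ZMod p) → ZMod p)) :
    Set ((Fin n → ZMod p) → ZMod p) :=
  {g | ∀ f ∈ S, dotF g f = 0}

/-! ### Auxiliary lemmas -/

section Aux

open MvPolynomial

/-- exponent reduction -/
def redE (p e : ℕ) : ℕ := if e = 0 then 0 else (e - 1) % (p - 1) + 1

lemma redE_le {p : ℕ} (e : ℕ) : redE p e ≤ e := by
  unfold redE; split
  · omega
  · have := Nat.mod_le (e - 1) (p - 1); omega

lemma redE_le_sub_one {p : ℕ} (hp : 2 ≤ p) (e : ℕ) : redE p e ≤ p - 1 := by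
  unfold redE; split
  · omega
  · have := Nat.mod_lt (e - 1) (show 0 < p - 1 by omega); omega

lemma pow_redE {p : ℕ} (hp : p.Prime) (x : ZMod p) (e : ℕ) : x ^ redE p e = x ^ e := by
  haveI : Fact p.Prime := ⟨hp⟩
  unfold redE
  split
  · subst ‹e = 0›; rfl
  · rename_i he
    have hp1 : 0 < p - 1 := by have := hp.two_le; omega
    have hdecomp : e = ((e - 1) % (p - 1) + 1) + (p - 1) * ((e - 1) / (p - 1)) := by
      have := Nat.mod_add_div (e - 1) (p - 1); omega
    rcases eq_or_ne x 0 with rfl | hx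
    · rw [zero_pow (by omega), zero_pow he]
    · have h1 : x ^ (p-1) = 1 := ZMod.pow_card_sub_one_eq_one hx
      calc x ^ ((e - 1) % (p - 1) + 1)
          = x ^ ((e - 1) % (p - 1) + 1) * (x ^ (p-1)) ^ ((e - 1) / (p - 1)) := by
            rw [h1, one_pow, mul_one]
        _ = x ^ e := by rw [← pow_mul, ← pow_add, ← hdecomp]

/-- Any polynomial can be reduced to one with individual degrees ≤ p-1 without
increasing total degree, with the same evaluation. -/
lemma exists_reduced {p : ℕ} (hp : p.Prime) {n : ℕ} (P : MvPolynomial (Fin n) (ZMod p)) :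
    ∃ Q : MvPolynomial (Fin n) (ZMod p),
      Q.totalDegree ≤ P.totalDegree ∧ (∀ i, Q.degreeOf i ≤ p - 1) ∧
      ∀ x, eval x Q = eval x P := by
  classical
  refine ⟨∑ s ∈ P.support, monomial (Finsupp.equivFunOnFinite.symm fun i => redE p (s i))
    (P.coeff s), ?_, ?_, ?_⟩
  · refine (totalDegree_finset_sum _ _).trans (Finset.sup_le fun s hs => ?_)
    refine (totalDegree_monomial_le _ _).trans ?_
    calc ((Finsupp.equivFunOnFinite.symm fun i => redE p (s i)).sum fun _ => id)
        = ∑ i, redE p (s i) := by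
          rw [Finsupp.sum_fintype]; · rfl
          · intro; rfl
    _ ≤ ∑ i, s i := Finset.sum_le_sum fun i _ => redE_le _
    _ = s.sum fun _ e => e := by
        rw [Finsupp.sum_fintype]; intro; rfl
    _ ≤ P.totalDegree := le_totalDegree hs
  · intro i
    rw [degreeOf_le_iff]
    intro t ht
    have := MvPolynomial.support_sum ht
    simp only [Finset.mem_biUnion] at this
    obtain ⟨s, _, hts⟩ := this
    have := MvPolynomial.support_monomial_subset hts
    simp only [Finset.mem_singleton] at this
    subst this
    simpa using redE_le_sub_one hp.two_le (s i)
  · intro x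
    rw [map_sum]
    conv_rhs => rw [P.as_sum, map_sum]
    refine Finset.sum_congr rfl fun s _ => ?_
    rw [eval_monomial, eval_monomial]
    congr 1
    rw [Finsupp.prod_fintype _ _ (fun _ => pow_zero _),
        Finsupp.prod_fintype _ _ (fun _ => pow_zero _)]
    exact Finset.prod_congr rfl fun i _ => pow_redE hp _ _

lemma mem_of_poly {p n D : ℕ} (hp : p.Prime) (P : MvPolynomial (Fin n) (ZMod p))
    (h : P.totalDegree ≤ D) : (fun x => eval x P) ∈ PolyFns p n D := by
  obtain ⟨Q, h1, h2, h3⟩ := exists_reduced hp P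
  exact ⟨Q, h1.trans h, h2, fun x => h3 x⟩

lemma poly_of_mem {p n D : ℕ} {f : (Fin n → ZMod p) → ZMod p} (h : f ∈ PolyFns p n D) :
    ∃ P : MvPolynomial (Fin n) (ZMod p), P.totalDegree ≤ D ∧ f = fun x => eval x P := by
  obtain ⟨P, h1, _, h3⟩ := h
  exact ⟨P, h1, by funext x; exact (h3 x).symm⟩

lemma add_mem_poly {p n D : ℕ} (hp : p.Prime) {f g : (Fin n → ZMod p) → ZMod p}
    (hf : f ∈ PolyFns p n D) (hg : g ∈ PolyFns p n D) : f + g ∈ PolyFns p n D := by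
  obtain ⟨P, hP, rfl⟩ := poly_of_mem hf
  obtain ⟨Q, hQ, rfl⟩ := poly_of_mem hg
  have : ((fun x => eval x P) + fun x => eval x Q) = fun x => eval x (P + Q) := by
    funext x; simp
  rw [this]
  exact mem_of_poly hp _ ((totalDegree_add P Q).trans (max_le hP hQ))

lemma neg_mem_poly {p n D : ℕ} (hp : p.Prime) {f : (Fin n → ZMod p) → ZMod p}
    (hf : f ∈ PolyFns p n D) : -f ∈ PolyFns p n D := by
  obtain ⟨P, hP, rfl⟩ := poly_of_mem hf
  have : (-fun x => eval x P) = fun x => eval x (-P) := by funext x; simp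
  rw [this]
  exact mem_of_poly hp _ (by rwa [totalDegree_neg])

lemma mul_mem_poly {p n D₁ D₂ : ℕ} (hp : p.Prime) {f g : (Fin n → ZMod p) → ZMod p}
    (hf : f ∈ PolyFns p n D₁) (hg : g ∈ PolyFns p n D₂) : f * g ∈ PolyFns p n (D₁ + D₂) := by
  obtain ⟨P, hP, rfl⟩ := poly_of_mem hf
  obtain ⟨Q, hQ, rfl⟩ := poly_of_mem hg
  have : ((fun x => eval x P) * fun x => eval x Q) = fun x => eval x (P * Q) := by
    funext x; simp
  rw [this]
  exact mem_of_poly hp _ ((totalDegree_mul P Q).trans (Nat.add_le_add hP hQ))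

lemma zero_mem_poly {p n D : ℕ} : (0 : (Fin n → ZMod p) → ZMod p) ∈ PolyFns p n D :=
  ⟨0, by simp, by simp, by simp⟩

lemma polyFns_mono {p n D D' : ℕ} (h : D ≤ D') : PolyFns p n D ⊆ PolyFns p n D' :=
  fun _ ⟨P, h1, h2, h3⟩ => ⟨P, h1.trans h, h2, h3⟩

/-- linear functional given by dotting with z -/
def dotL {p : ℕ} (n : ℕ) (z : Fin n → ZMod p) : (Fin n → ZMod p) →ₗ[ZMod p] ZMod p where
  toFun v := ∑ i, v i * z i
  map_add' u v := by simp [add_mul, Finset.sum_add_distrib]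
  map_smul' c v := by simp [Finset.mul_sum, mul_assoc]

lemma card_ker_dot {p : ℕ} [Fact p.Prime] {n : ℕ} {z : Fin n → ZMod p} (hz : z ≠ 0) :
    Fintype.card {v : Fin n → ZMod p // ∑ i, v i * z i = 0} = p ^ (n - 1) := by
  classical
  obtain ⟨i₀, hi₀⟩ : ∃ i, z i ≠ 0 := by
    by_contra h; push_neg at h; exact hz (funext h)
  have hsurj : Function.Surjective (dotL n z) := by
    intro c
    refine ⟨Pi.single i₀ (c * (z i₀)⁻¹), ?_⟩
    simp only [dotL, LinearMap.coe_mk, AddHom.coe_mk]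
    rw [Finset.sum_eq_single i₀]
    · rw [Pi.single_eq_same, mul_assoc, inv_mul_cancel₀ hi₀, mul_one]
    · intro i _ hne; rw [Pi.single_eq_of_ne hne, zero_mul]
    · simp
  have hrange : LinearMap.range (dotL n z) = ⊤ := LinearMap.range_eq_top.mpr hsurj
  have hrk := LinearMap.finrank_range_add_finrank_ker (dotL n z)
  rw [hrange, finrank_top, Module.finrank_self, Module.finrank_pi] at hrk
  rw [Fintype.card_fin] at hrk
  have hker : Module.finrank (ZMod p) (LinearMap.ker (dotL n z)) = n - 1 := by omega
  have hcard : Fintype.card (LinearMap.ker (dotL n z)) =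
      Fintype.card (ZMod p) ^ Module.finrank (ZMod p) (LinearMap.ker (dotL n z)) :=
    Module.card_eq_pow_finrank
  rw [hker, ZMod.card] at hcard
  rw [← hcard]
  apply Fintype.card_congr
  exact Equiv.subtypeEquivRight fun v => by
    rw [LinearMap.mem_ker]; exact Iff.rfl

lemma exists_good_a {p : ℕ} [Fact p.Prime] {n m : ℕ} (T : Finset (Fin n → ZMod p))
    (hT : T.card < p ^ m) (x₀ : Fin n → ZMod p) (hx₀ : x₀ ∉ T) :
    ∃ a : Fin m → (Fin n → ZMod p),
      ∀ y ∈ T, ∃ j, (∑ i, a j i * (y i - x₀ i)) ≠ 0 := by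
  classical
  by_contra hcon
  push_neg at hcon
  rcases Nat.eq_zero_or_pos n with rfl | hn
  · rcases Finset.eq_empty_or_nonempty T with rfl | ⟨y, hy⟩
    · obtain ⟨y, hy, -⟩ := hcon (fun _ _ => 0); simp at hy
    · have : y = x₀ := by funext i; exact (Nat.not_lt_zero _ i.isLt).elim
      exact hx₀ (this ▸ hy)
  have hsub : (Finset.univ : Finset (Fin m → (Fin n → ZMod p))) ⊆
      T.biUnion (fun y => Finset.univ.filter
        (fun a : Fin m → (Fin n → ZMod p) => ∀ j, (∑ i, a j i * (y i - x₀ i)) = 0)) := by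
    intro a _
    obtain ⟨y, hy, hall⟩ := hcon a
    exact Finset.mem_biUnion.mpr ⟨y, hy, Finset.mem_filter.mpr ⟨Finset.mem_univ _, hall⟩⟩
  have hbadcard : ∀ y ∈ T,
      (Finset.univ.filter
        (fun a : Fin m → (Fin n → ZMod p) => ∀ j, (∑ i, a j i * (y i - x₀ i)) = 0)).card
      = (p ^ (n - 1)) ^ m := by
    intro y hy
    have hz : (fun i => y i - x₀ i) ≠ 0 := by
      intro h
      apply hx₀
      have hyx : y = x₀ := by
        funext i
        have h2 := congrFun h i
        simp only [Pi.zero_apply, sub_eq_zero] at h2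
        exact h2
      rwa [← hyx]
    set K : Finset (Fin n → ZMod p) :=
      Finset.univ.filter (fun v => (∑ i, v i * (y i - x₀ i)) = 0) with hK
    have hKcard : K.card = p ^ (n - 1) := by
      rw [hK, ← Fintype.card_subtype]
      exact card_ker_dot hz
    have hfil : Finset.univ.filter
        (fun a : Fin m → (Fin n → ZMod p) => ∀ j, (∑ i, a j i * (y i - x₀ i)) = 0)
        = Fintype.piFinset (fun _ : Fin m => K) := by
      ext a
      simp [hK, Fintype.mem_piFinset]
    rw [hfil, Fintype.card_piFinset]
    simp [hKcard]
  have hle := (Finset.card_le_card hsub).trans (Finset.card_biUnion_le ..)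
  rw [Finset.card_univ, Fintype.card_fun, Fintype.card_fin] at hle
  rw [Finset.sum_congr rfl hbadcard, Finset.sum_const, smul_eq_mul] at hle
  have hV : Fintype.card (Fin n → ZMod p) = p ^ n := by
    rw [Fintype.card_fun, Fintype.card_fin, ZMod.card]
  rw [hV] at hle
  have hlt : T.card * (p ^ (n - 1)) ^ m < p ^ m * (p ^ (n - 1)) ^ m := by
    have hpos : 0 < (p ^ (n - 1)) ^ m := by
      have : 0 < p := (Fact.out : p.Prime).pos
      positivity
    exact Nat.mul_lt_mul_of_lt_of_le hT (le_refl _) hpos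
  have heq : p ^ m * (p ^ (n - 1)) ^ m = (p ^ n) ^ m := by
    rw [← Nat.mul_pow, ← pow_succ']
    have h3 : n - 1 + 1 = n := by omega
    rw [h3]
  omega

lemma interp_mem {p n m : ℕ} (hp : p.Prime) (x₀ : Fin n → ZMod p)
    (a : Fin m → (Fin n → ZMod p)) :
    (fun x => ∏ j : Fin m, (1 - (∑ i, a j i * (x i - x₀ i)) ^ (p - 1)))
      ∈ PolyFns p n ((p - 1) * m) := by
  haveI : Fact p.Prime := ⟨hp⟩
  set R : MvPolynomial (Fin n) (ZMod p) :=
    ∏ j : Fin m, (1 - (∑ i, C (a j i) * (X i - C (x₀ i))) ^ (p - 1)) with hR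
  have hev : (fun x => ∏ j : Fin m, (1 - (∑ i, a j i * (x i - x₀ i)) ^ (p - 1)))
      = fun x => eval x R := by
    funext x
    simp [hR]
  rw [hev]
  apply mem_of_poly hp
  calc R.totalDegree ≤ ∑ j : Fin m,
      ((1 : MvPolynomial (Fin n) (ZMod p))
        - (∑ i, C (a j i) * (X i - C (x₀ i))) ^ (p - 1)).totalDegree :=
        totalDegree_finset_prod _ _
    _ ≤ ∑ _j : Fin m, (p - 1) := by
        refine Finset.sum_le_sum fun j _ => ?_
        have hL : (∑ i, C (a j i) * (X i - C (x₀ i)) :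
            MvPolynomial (Fin n) (ZMod p)).totalDegree ≤ 1 := by
          refine (totalDegree_finset_sum _ _).trans (Finset.sup_le fun i _ => ?_)
          refine (totalDegree_mul _ _).trans ?_
          rw [totalDegree_C]
          have : ((X i - C (x₀ i)) : MvPolynomial (Fin n) (ZMod p)).totalDegree ≤ 1 := by
            rw [sub_eq_add_neg]
            refine (totalDegree_add _ _).trans (max_le ?_ ?_)
            · exact le_of_eq (totalDegree_X i)
            · rw [totalDegree_neg, totalDegree_C]; omega
          omega
        have hpow : ((∑ i, C (a j i) * (X i - C (x₀ i))) ^ (p - 1) :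
            MvPolynomial (Fin n) (ZMod p)).totalDegree ≤ p - 1 := by
          refine (totalDegree_pow _ _).trans ?_
          calc (p - 1) * (∑ i, C (a j i) * (X i - C (x₀ i)) :
              MvPolynomial (Fin n) (ZMod p)).totalDegree ≤ (p - 1) * 1 :=
                Nat.mul_le_mul_left _ hL
            _ = p - 1 := Nat.mul_one _
        rw [sub_eq_add_neg]
        refine (totalDegree_add _ _).trans (max_le ?_ ?_)
        · rw [totalDegree_one]; omega
        · rwa [totalDegree_neg]
    _ = (p - 1) * m := by rw [Finset.sum_const, Finset.card_univ, Fintype.card_fin,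
        smul_eq_mul, Nat.mul_comm]

lemma interp_at_x₀ {p n m : ℕ} (hp : p.Prime) (x₀ : Fin n → ZMod p)
    (a : Fin m → (Fin n → ZMod p)) :
    (∏ j : Fin m, (1 - (∑ i, a j i * (x₀ i - x₀ i)) ^ (p - 1))) = 1 := by
  have h2 := hp.two_le
  apply Finset.prod_eq_one
  intro j _
  simp [zero_pow (show p - 1 ≠ 0 by omega)]

lemma interp_at_other {p n m : ℕ} (hp : p.Prime) {x₀ y : Fin n → ZMod p}
    {a : Fin m → (Fin n → ZMod p)} {j : Fin m}
    (hj : (∑ i, a j i * (y i - x₀ i)) ≠ 0) :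
    (∏ j : Fin m, (1 - (∑ i, a j i * (y i - x₀ i)) ^ (p - 1))) = 0 := by
  haveI : Fact p.Prime := ⟨hp⟩
  refine Finset.prod_eq_zero (Finset.mem_univ j) ?_
  rw [ZMod.pow_card_sub_one_eq_one hj, sub_self]

lemma zeta_add {p : ℕ} [NeZero p] {ω : ℂ} (hω : IsPrimitiveRoot ω p) (a b : ZMod p) :
    ω ^ (a + b).val = ω ^ a.val * ω ^ b.val := by
  rw [← pow_add, ZMod.val_add]
  conv_rhs => rw [← Nat.div_add_mod (a.val + b.val) p, pow_add, pow_mul,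
    hω.pow_eq_one, one_pow, one_mul]

lemma zeta_ne_one {p : ℕ} [NeZero p] {ω : ℂ} (hω : IsPrimitiveRoot ω p) {c : ZMod p}
    (hc : c ≠ 0) : ω ^ c.val ≠ 1 := by
  apply hω.pow_ne_one_of_pos_of_lt
  · exact fun h => hc ((ZMod.val_eq_zero c).mp h)
  · exact ZMod.val_lt c

lemma dotF_add_right {p n : ℕ} [NeZero p] (f g h : (Fin n → ZMod p) → ZMod p) :
    dotF f (g + h) = dotF f g + dotF f h := by
  unfold dotF
  rw [← Finset.sum_add_distrib]
  exact Finset.sum_congr rfl fun x _ => by simp [mul_add]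

end Aux

/-- Folding kills bad Fourier coefficients: if `A` is folded over
`J = {Σ r_i q_i : r_i ∈ P^n_{(p-1)(d-3)}}` and `β` has small support containing a point
where some `q_i` is nonzero, then `Â(β) = 0`. -/
theorem folding_kills_bad_coefficients (p n d k : ℕ) (hp : p.Prime) [NeZero p]
    (hd : 3 < d)
    (ω : ℂ) (hω : IsPrimitiveRoot ω p)
    (q : Fin k → ((Fin n → ZMod p) → ZMod p))
    (hq : ∀ i, q i ∈ PolyFns p n (3 * (p - 1)))
    (β : (Fin n → ZMod p) → ZMod p)
    (hsupp : {x | β x ≠ 0}.ncard < p ^ (d - 3))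
    (hx : ∃ x, β x ≠ 0 ∧ ∃ i, q i x ≠ 0)
    (A : ((Fin n → ZMod p) → ZMod p) → ℂ)
    (hfold : ∀ g ∈ PolyFns p n ((p - 1) * d),
      ∀ r : Fin k → ((Fin n → ZMod p) → ZMod p),
        (∀ i, r i ∈ PolyFns p n ((p - 1) * (d - 3))) →
        A (g + ∑ i, r i * q i) = A g) :
    (∑ g ∈ (Set.toFinite (PolyFns p n ((p - 1) * d))).toFinset,
        A g * (starRingEnd ℂ) (ω ^ (dotF β g).val))
      / ((Set.toFinite (PolyFns p n ((p - 1) * d))).toFinset.card : ℂ) = 0 := by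
  classical
  haveI : Fact p.Prime := ⟨hp⟩
  obtain ⟨x₀, hβx₀, i₀, hqx₀⟩ := hx
  -- the support away from x₀
  set T : Finset (Fin n → ZMod p) :=
    Finset.univ.filter (fun x => β x ≠ 0 ∧ x ≠ x₀) with hT
  have hTcard : T.card < p ^ (d - 3) := by
    refine lt_of_le_of_lt ?_ hsupp
    rw [Set.ncard_eq_toFinset_card']
    apply Finset.card_le_card
    intro x hxT
    rw [Set.mem_toFinset]
    exact (Finset.mem_filter.mp hxT).2.1
  have hx₀T : x₀ ∉ T := by
    rw [hT]
    simp
  obtain ⟨a, ha⟩ := exists_good_a T hTcard x₀ hx₀T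
  -- the interpolating function r
  set r : (Fin n → ZMod p) → ZMod p :=
    fun x => ∏ j : Fin (d - 3), (1 - (∑ i, a j i * (x i - x₀ i)) ^ (p - 1)) with hr
  have hrmem : r ∈ PolyFns p n ((p - 1) * (d - 3)) := interp_mem hp x₀ a
  have hrx₀ : r x₀ = 1 := interp_at_x₀ hp x₀ a
  have hrT : ∀ y, β y ≠ 0 → y ≠ x₀ → r y = 0 := by
    intro y h1 h2
    obtain ⟨j, hj⟩ := ha y (by rw [hT]; simp [h1, h2])
    exact interp_at_other hp hj
  -- the shift j = r * q i₀
  set jf : (Fin n → ZMod p) → ZMod p := r * q i₀ with hjf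
  have hjfmem : jf ∈ PolyFns p n ((p - 1) * d) := by
    have := mul_mem_poly hp hrmem (hq i₀)
    refine polyFns_mono (le_of_eq ?_) this
    have heq : (p - 1) * (d - 3) + 3 * (p - 1) = (p - 1) * ((d - 3) + 3) := by ring
    rw [heq]
    congr 1
    omega
  -- the Fourier character is nontrivial on jf
  set c : ZMod p := dotF β jf with hc
  have hcne : c ≠ 0 := by
    have hval : c = β x₀ * (r x₀ * q i₀ x₀) := by
      rw [hc]
      unfold dotF
      rw [Finset.sum_eq_single x₀]
      · rfl
      · intro y _ hy
        rcases eq_or_ne (β y) 0 with h | h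
        · rw [h, zero_mul]
        · rw [hjf]
          show β y * (r y * q i₀ y) = 0
          rw [hrT y h hy, zero_mul, mul_zero]
      · intro h
        exact absurd (Finset.mem_univ x₀) h
    rw [hval, hrx₀, one_mul]
    exact mul_ne_zero hβx₀ hqx₀
  -- conclude : the sum is invariant under the shift and gets multiplied by a nontrivial root
  set S := (Set.toFinite (PolyFns p n ((p - 1) * d))).toFinset with hS
  have hmemS : ∀ g, g ∈ S ↔ g ∈ PolyFns p n ((p - 1) * d) := fun g =>
    Set.Finite.mem_toFinset _
  have hbij : ∑ g ∈ S, A (g + jf) * (starRingEnd ℂ) (ω ^ (dotF β (g + jf)).val)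
      = ∑ g ∈ S, A g * (starRingEnd ℂ) (ω ^ (dotF β g).val) := by
    refine Finset.sum_nbij' (fun g => g + jf) (fun g => g - jf) ?_ ?_ ?_ ?_ ?_
    · intro g hg
      rw [hmemS] at hg ⊢
      exact add_mem_poly hp hg hjfmem
    · intro g hg
      rw [hmemS] at hg ⊢
      show g - jf ∈ PolyFns p n ((p - 1) * d)
      rw [sub_eq_add_neg]
      exact add_mem_poly hp hg (neg_mem_poly hp hjfmem)
    · intro g _; exact add_sub_cancel_right g jf
    · intro g _; exact sub_add_cancel g jf
    · intro g _; rfl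
  have hstep : ∀ g ∈ S, A (g + jf) * (starRingEnd ℂ) (ω ^ (dotF β (g + jf)).val)
      = (A g * (starRingEnd ℂ) (ω ^ (dotF β g).val)) * (starRingEnd ℂ) (ω ^ c.val) := by
    intro g hg
    rw [hmemS] at hg
    have hA : A (g + jf) = A g := by
      have hsum : (∑ i, (fun i => if i = i₀ then r else 0) i * q i) = jf := by
        rw [hjf]
        rw [Finset.sum_eq_single i₀]
        · simp
        · intro i _ hi; simp [hi]
        · intro h; exact absurd (Finset.mem_univ i₀) h
      have hrr : ∀ i : Fin k, (if i = i₀ then r else 0) ∈ PolyFns p n ((p - 1) * (d - 3)) := by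
        intro i
        split
        · exact hrmem
        · exact zero_mem_poly
      have := hfold g hg (fun i => if i = i₀ then r else 0) (fun i => hrr i)
      rwa [hsum] at this
    rw [hA, dotF_add_right, ← hc, zeta_add hω, map_mul, mul_assoc]
  have h1 : ∑ g ∈ S, A (g + jf) * (starRingEnd ℂ) (ω ^ (dotF β (g + jf)).val)
      = (∑ g ∈ S, A g * (starRingEnd ℂ) (ω ^ (dotF β g).val)) * (starRingEnd ℂ) (ω ^ c.val) := by
    rw [Finset.sum_congr rfl hstep, ← Finset.sum_mul]
  have h2 : (∑ g ∈ S, A g * (starRingEnd ℂ) (ω ^ (dotF β g).val)) * (starRingEnd ℂ) (ω ^ c.val)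
      = ∑ g ∈ S, A g * (starRingEnd ℂ) (ω ^ (dotF β g).val) := by rw [← h1, hbij]
  have hK : (starRingEnd ℂ) (ω ^ c.val) ≠ 1 := by
    intro h
    exact zeta_ne_one hω hcne ((starRingEnd ℂ).injective (by rw [h, map_one]))
  have hTsum : (∑ g ∈ S, A g * (starRingEnd ℂ) (ω ^ (dotF β g).val)) = 0 := by
    by_contra h
    exact hK (mul_left_cancel₀ h (by rw [h2, mul_one]))
  rw [hTsum, zero_div]
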